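/- Let X be a real Banach space, F a nonempty closed bounded subset, and x ∈ X such that Q_F(x) ≠ ∅ (F is remotal at x). If F is sup-compact at x (every maximizing sequence for x in F has a convergent subsequence with limit in F), then Q_F(x) is compact and F is strongly remotal at x, i.e., for every ε > 0 there exists δ > 0 with Q_F(x,δ) ⊆ Q_F(x) + ε B_X. -/

import Mathlib

open Pointwise

open Filter Topology

noncomputable def farR {X : Type*} [NormedAddCommGroup X] (F : Set X) (x : X) : ℝ :=
  sSup ((fun y => ‖x - y‖) '' F)

def QF {X : Type*} [NormedAddCommGroup X] (F : Set X) (x : X) (δ : ℝ) : Set X :=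
  {y ∈ F | farR F x - δ ≤ ‖x - y‖}

theorem stmt9 {X : Type*} [NormedAddCommGroup X] [NormedSpace ℝ X] [CompleteSpace X]
    (F : Set X) (hne : F.Nonempty) (hcl : IsClosed F) (hbd : Bornology.IsBounded F)
    (x : X) (hrem : (QF F x 0).Nonempty)
    (hsup : ∀ y : ℕ → X, (∀ n, y n ∈ F) →
      Tendsto (fun n => ‖x - y n‖) atTop (𝓝 (farR F x)) →
      ∃ φ : ℕ → ℕ, StrictMono φ ∧ ∃ l ∈ F, Tendsto (y ∘ φ) atTop (𝓝 l)) :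
    IsCompact (QF F x 0) ∧
      ∀ ε > 0, ∃ δ > 0, QF F x δ ⊆ QF F x 0 + Metric.closedBall (0 : X) ε := by
  have hbdd : BddAbove ((fun y => ‖x - y‖) '' F) := by
    obtain ⟨C, hC⟩ := (Metric.isBounded_iff_subset_closedBall x).mp hbd
    refine ⟨C, ?_⟩
    rintro _ ⟨y, hy, rfl⟩
    have := Metric.mem_closedBall.mp (hC hy)
    simpa [dist_eq_norm, norm_sub_rev] using this
  have hle : ∀ y ∈ F, ‖x - y‖ ≤ farR F x := fun y hy => le_csSup hbdd ⟨y, hy, rfl⟩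
  -- limit of a maximizing subsequence belongs to QF F x 0
  have hlim_mem : ∀ (y : ℕ → X) (φ : ℕ → ℕ) (l : X), l ∈ F →
      Tendsto (fun n => ‖x - y (φ n)‖) atTop (𝓝 (farR F x)) →
      Tendsto (y ∘ φ) atTop (𝓝 l) → l ∈ QF F x 0 := by
    intro y φ l hlF htend hconv
    have hnorm : Tendsto (fun n => ‖x - y (φ n)‖) atTop (𝓝 ‖x - l‖) :=
      ((continuous_const.sub continuous_id).norm.tendsto l).comp hconv
    have : ‖x - l‖ = farR F x := tendsto_nhds_unique hnorm htend
    exact ⟨hlF, by simp [this]⟩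
  constructor
  · refine IsSeqCompact.isCompact ?_
    intro y hy
    have hyF : ∀ n, y n ∈ F := fun n => (hy n).1
    have heq : ∀ n, ‖x - y n‖ = farR F x := fun n =>
      le_antisymm (hle _ (hyF n)) (by simpa using (hy n).2)
    have hmax : Tendsto (fun n => ‖x - y n‖) atTop (𝓝 (farR F x)) := by
      simp only [heq]; exact tendsto_const_nhds
    obtain ⟨φ, hφ, l, hlF, hconv⟩ := hsup y hyF hmax
    refine ⟨l, ?_, φ, hφ, hconv⟩
    exact hlim_mem y φ l hlF (by simp only [heq]; exact tendsto_const_nhds) hconv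
  · intro ε hε
    by_contra h
    push_neg at h
    have hδ : ∀ n : ℕ, ∃ z, z ∈ QF F x (1 / (n + 1)) ∧
        z ∉ QF F x 0 + Metric.closedBall (0 : X) ε := by
      intro n
      obtain ⟨z, hz1, hz2⟩ := Set.not_subset.mp (h (1 / (n + 1)) (by positivity))
      exact ⟨z, hz1, hz2⟩
    choose y hy1 hy2 using hδ
    have hyF : ∀ n, y n ∈ F := fun n => (hy1 n).1
    have hmax : Tendsto (fun n => ‖x - y n‖) atTop (𝓝 (farR F x)) := by
      have h1 : Tendsto (fun n : ℕ => farR F x - 1 / (n + 1)) atTop (𝓝 (farR F x)) := by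
        simpa using tendsto_const_nhds.sub (tendsto_one_div_add_atTop_nhds_zero_nat (𝕜 := ℝ))
      exact tendsto_of_tendsto_of_tendsto_of_le_of_le h1 tendsto_const_nhds
        (fun n => (hy1 n).2) (fun n => hle _ (hyF n))
    obtain ⟨φ, hφ, l, hlF, hconv⟩ := hsup y hyF hmax
    have hsub : Tendsto (fun n => ‖x - y (φ n)‖) atTop (𝓝 (farR F x)) :=
      hmax.comp hφ.tendsto_atTop
    have hlQ : l ∈ QF F x 0 := hlim_mem y φ l hlF hsub hconv
    have : ∀ᶠ n in atTop, ‖y (φ n) - l‖ ≤ ε := by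
      have := (tendsto_iff_norm_sub_tendsto_zero.mp hconv)
      filter_upwards [(this.eventually (ge_mem_nhds hε))] with n hn
      exact hn
    obtain ⟨n, hn⟩ := this.exists
    apply hy2 (φ n)
    refine ⟨l, hlQ, y (φ n) - l, ?_, by module⟩
    simpa using hn
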